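/- Let Φ̂ ∈ Π_{p,T} and assume additionally that the lower-right T×T block Φ̂₂₂ of Φ̂ is negative definite (Φ̂₂₂ ≺ 0). Then Σ = Σ̄: a pair (A,B) is consistent with the data under data perturbation if and only if [I_n, A, B] N [I_n, A, B]ᵀ ⪰ 0 with N = [E, 𝐗] Φ̂ [E, 𝐗]ᵀ. -/

import Mathlib

open Matrix

/-- The four Moore–Penrose equations characterizing the pseudoinverse. -/
def IsMoorePenroseInv {m n : Type*} [Fintype m] [Fintype n]
    (A : Matrix m n ℝ) (Ad : Matrix n m ℝ) : Prop :=
  A * Ad * A = A ∧ Ad * A * Ad = Ad ∧ (A * Ad)ᵀ = A * Ad ∧ (Ad * A)ᵀ = Ad * A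

/-- The stacked data matrix `𝐗 = [X₊ᵀ, −X₋ᵀ, −U₋ᵀ]ᵀ`. -/
def dataX {n m T : ℕ} (Xp Xm : Matrix (Fin n) (Fin T) ℝ) (Um : Matrix (Fin m) (Fin T) ℝ) :
    Matrix (Fin n ⊕ (Fin n ⊕ Fin m)) (Fin T) ℝ :=
  fromRows Xp (fromRows (-Xm) (-Um))

/-- The row block `S = [I_n, A, B]`. -/
def rowS {n m : ℕ} (A : Matrix (Fin n) (Fin n) ℝ) (B : Matrix (Fin n) (Fin m) ℝ) :
    Matrix (Fin n) (Fin n ⊕ (Fin n ⊕ Fin m)) ℝ :=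
  fromCols 1 (fromCols A B)

/-- `(A,B)` is consistent with the data under data perturbation: there exists `Δ̂`
with `S𝐗 = S E Δ̂` satisfying the QMI for `Φ̂`. -/
def ConsistentDP {n m p T : ℕ} (Xp Xm : Matrix (Fin n) (Fin T) ℝ) (Um : Matrix (Fin m) (Fin T) ℝ)
    (E : Matrix (Fin n ⊕ (Fin n ⊕ Fin m)) (Fin p) ℝ)
    (Φ : Matrix (Fin p ⊕ Fin T) (Fin p ⊕ Fin T) ℝ)
    (A : Matrix (Fin n) (Fin n) ℝ) (B : Matrix (Fin n) (Fin m) ℝ) : Prop :=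
  ∃ Δ : Matrix (Fin p) (Fin T) ℝ,
    rowS A B * dataX Xp Xm Um = rowS A B * E * Δ ∧
    ((fromRows (1 : Matrix (Fin p) (Fin p) ℝ) Δᵀ)ᵀ * Φ * fromRows (1 : Matrix (Fin p) (Fin p) ℝ) Δᵀ).PosSemidef

/-- The matrix `N = [E, 𝐗] Φ̂ [E, 𝐗]ᵀ`. -/
def matN {n m p T : ℕ} (Xp Xm : Matrix (Fin n) (Fin T) ℝ) (Um : Matrix (Fin m) (Fin T) ℝ)
    (E : Matrix (Fin n ⊕ (Fin n ⊕ Fin m)) (Fin p) ℝ)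
    (Φ : Matrix (Fin p ⊕ Fin T) (Fin p ⊕ Fin T) ℝ) :
    Matrix (Fin n ⊕ (Fin n ⊕ Fin m)) (Fin n ⊕ (Fin n ⊕ Fin m)) ℝ :=
  fromCols E (dataX Xp Xm Um) * Φ * (fromCols E (dataX Xp Xm Um))ᵀ

section Aux
noncomputable section

lemma quad_e {n p : ℕ} (M : Matrix (Fin n) (Fin p) ℝ) (x : Fin n → ℝ) :
    x ⬝ᵥ ((M * Mᵀ) *ᵥ x) = (Mᵀ *ᵥ x) ⬝ᵥ (Mᵀ *ᵥ x) := by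
  rw [← mulVec_mulVec, dotProduct_mulVec, ← Matrix.mulVec_transpose]

lemma douglas {n p T : ℕ} (A : Matrix (Fin n) (Fin p) ℝ) (B : Matrix (Fin n) (Fin T) ℝ)
    (h : (A * Aᵀ - B * Bᵀ).PosSemidef) :
    ∃ Z : Matrix (Fin p) (Fin T) ℝ, A * Z = B ∧ (1 - Z * Zᵀ).PosSemidef := by
  classical
  have quad : ∀ x : Fin n → ℝ, (Bᵀ *ᵥ x) ⬝ᵥ (Bᵀ *ᵥ x) ≤ (Aᵀ *ᵥ x) ⬝ᵥ (Aᵀ *ᵥ x) := by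
    intro x
    have h0 := h.dotProduct_mulVec_nonneg x
    have hs : star x = x := by ext i; simp
    rw [hs, sub_mulVec, dotProduct_sub, quad_e, quad_e, sub_nonneg] at h0
    exact h0
  set f : EuclideanSpace ℝ (Fin n) →ₗ[ℝ] EuclideanSpace ℝ (Fin p) := toEuclideanLin Aᵀ with hf
  set g : EuclideanSpace ℝ (Fin n) →ₗ[ℝ] EuclideanSpace ℝ (Fin T) := toEuclideanLin Bᵀ with hg
  have normsq : ∀ {k : ℕ} (v : EuclideanSpace ℝ (Fin k)),
      ‖v‖ ^ 2 = (WithLp.equiv 2 (Fin k → ℝ) v) ⬝ᵥ (WithLp.equiv 2 (Fin k → ℝ) v) := by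
    intro k v
    rw [← real_inner_self_eq_norm_sq, EuclideanSpace.inner_eq_star_dotProduct]
    congr 1
  have hfx : ∀ x, WithLp.equiv 2 (Fin p → ℝ) (f x) = Aᵀ *ᵥ (WithLp.equiv 2 (Fin n → ℝ) x) :=
    fun x => ofLp_toEuclideanLin_apply Aᵀ x
  have hgx : ∀ x, WithLp.equiv 2 (Fin T → ℝ) (g x) = Bᵀ *ᵥ (WithLp.equiv 2 (Fin n → ℝ) x) :=
    fun x => ofLp_toEuclideanLin_apply Bᵀ x
  have key : ∀ x, ‖g x‖ ≤ ‖f x‖ := by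
    intro x
    have h2 : ‖g x‖ ^ 2 ≤ ‖f x‖ ^ 2 := by
      rw [normsq, normsq, hfx, hgx]; exact quad _
    exact (abs_le_of_sq_le_sq' h2 (norm_nonneg _)).2
  have hker : LinearMap.ker f ≤ LinearMap.ker g := by
    intro x hx
    rw [LinearMap.mem_ker] at hx ⊢
    have := key x
    rw [hx, norm_zero] at this
    exact norm_le_zero_iff.mp this
  set K : Submodule ℝ (EuclideanSpace ℝ (Fin p)) := LinearMap.range f with hK
  set e := f.quotKerEquivRange with he
  set gbar := (LinearMap.ker f).liftQ g hker with hgbar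
  set phi : K →ₗ[ℝ] EuclideanSpace ℝ (Fin T) := gbar ∘ₗ (e.symm : K →ₗ[ℝ] _) with hphi
  have hphik : ∀ x : EuclideanSpace ℝ (Fin n), ∀ hm : f x ∈ K, phi ⟨f x, hm⟩ = g x := by
    intro x hm
    have : e.symm ⟨f x, hm⟩ = Submodule.Quotient.mk x := f.quotKerEquivRange_symm_apply_image x hm
    simp [hphi, this, hgbar]
  have hphile : ∀ k : K, ‖phi k‖ ≤ ‖(k : EuclideanSpace ℝ (Fin p))‖ := by
    rintro ⟨v, hv⟩
    obtain ⟨x, rfl⟩ := hv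
    exact (congrArg norm (hphik x _)).trans_le (key x)
  set C : EuclideanSpace ℝ (Fin p) →ₗ[ℝ] EuclideanSpace ℝ (Fin T) :=
    phi ∘ₗ (K.orthogonalProjectionOnto : EuclideanSpace ℝ (Fin p) →L[ℝ] K).toLinearMap with hC
  have hCf : ∀ x, C (f x) = g x := by
    intro x
    have hm : f x ∈ K := ⟨x, rfl⟩
    have : K.orthogonalProjectionOnto (f x) = ⟨f x, hm⟩ :=
      Submodule.orthogonalProjectionOnto_mem_subspace_eq_self (⟨f x, hm⟩ : K)
    simp [hC, this, hphik x hm]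
  have hCle : ∀ v, ‖C v‖ ≤ ‖v‖ := by
    intro v
    calc ‖C v‖ = ‖phi (K.orthogonalProjectionOnto v)‖ := rfl
    _ ≤ ‖((K.orthogonalProjectionOnto v : K) : EuclideanSpace ℝ (Fin p))‖ := hphile _
    _ ≤ ‖v‖ := by
        simpa using K.orthogonalProjectionOnto.le_opNorm v |>.trans
          (by nlinarith [K.orthogonalProjectionOnto_norm_le, norm_nonneg v,
            K.orthogonalProjectionOnto.opNorm_nonneg])
  set Zt : Matrix (Fin T) (Fin p) ℝ := toEuclideanLin.symm C with hZt
  have hCZ : toEuclideanLin Zt = C := toEuclideanLin.apply_symm_apply C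
  have hZx : ∀ y : EuclideanSpace ℝ (Fin p),
      WithLp.equiv 2 (Fin T → ℝ) (C y) = Zt *ᵥ (WithLp.equiv 2 (Fin p → ℝ) y) := by
    intro y
    rw [← hCZ]
    exact ofLp_toEuclideanLin_apply Zt y
  refine ⟨Ztᵀ, ?_, ?_⟩
  · have h1 : Zt * Aᵀ = Bᵀ := by
      apply toEuclideanLin.injective
      refine LinearMap.ext fun x => ?_
      have := congrArg (WithLp.equiv 2 (Fin T → ℝ)) (hCf x)
      rw [hZx, hfx, hgx] at this
      show WithLp.toLp 2 ((Zt * Aᵀ) *ᵥ WithLp.ofLp x) = WithLp.toLp 2 (Bᵀ *ᵥ WithLp.ofLp x)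
      rw [← mulVec_mulVec]
      exact congrArg (WithLp.toLp 2) this
    rw [← transpose_transpose B, ← h1, transpose_mul, transpose_transpose]
  · rw [transpose_transpose]
    refine Matrix.PosSemidef.of_dotProduct_mulVec_nonneg ?_ ?_
    · have h1 : (Ztᵀ * Zt).IsHermitian := by
        have := isHermitian_conjTranspose_mul_self Zt
        rwa [conjTranspose_eq_transpose_of_trivial] at this
      exact Matrix.isHermitian_one.sub h1
    · intro x
      have hs : star x = x := by ext i; simp
      rw [hs, sub_mulVec, dotProduct_sub, one_mulVec, sub_nonneg]
      have hqe : x ⬝ᵥ (Ztᵀ * Zt) *ᵥ x = (Zt *ᵥ x) ⬝ᵥ (Zt *ᵥ x) := by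
        have := quad_e Ztᵀ x
        rwa [transpose_transpose] at this
      rw [hqe]
      set v : EuclideanSpace ℝ (Fin p) := (WithLp.equiv 2 (Fin p → ℝ)).symm x with hv
      have hvx : WithLp.equiv 2 (Fin p → ℝ) v = x := rfl
      have h2 : ‖C v‖ ^ 2 ≤ ‖v‖ ^ 2 :=
        pow_le_pow_left₀ (norm_nonneg _) (hCle v) 2
      rw [normsq, normsq, hZx, hvx] at h2
      exact h2

lemma psd_conj {a : Type*} [Fintype a] [DecidableEq a] {b : Type*} [Fintype b]
    {M : Matrix a a ℝ} (hM : M.PosSemidef) (F : Matrix b a ℝ) :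
    (F * M * Fᵀ).PosSemidef := by
  have := hM.mul_mul_conjTranspose_same F
  rwa [conjTranspose_eq_transpose_of_trivial] at this

lemma expand_blocks {J : Type*} [Fintype J] {p T : ℕ}
    (X : Matrix J (Fin p) ℝ) (Y : Matrix J (Fin T) ℝ)
    (Φ : Matrix (Fin p ⊕ Fin T) (Fin p ⊕ Fin T) ℝ) :
    fromCols X Y * Φ * (fromCols X Y)ᵀ =
      X * Φ.toBlocks₁₁ * Xᵀ + X * Φ.toBlocks₁₂ * Yᵀ
      + Y * Φ.toBlocks₂₁ * Xᵀ + Y * Φ.toBlocks₂₂ * Yᵀ := by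
  conv_lhs => rw [← fromBlocks_toBlocks Φ]
  rw [fromCols_mul_fromBlocks, transpose_fromCols, fromCols_mul_fromRows,
    Matrix.add_mul, Matrix.add_mul]
  abel

end
end Aux

/-- Theorem 1, equality part under Φ̂₂₂ ≺ 0: Σ = Σ̄. -/
theorem Sigma_eq_SigmaBar_of_Phi22_negdef (n m p T : ℕ)
    (Xp Xm : Matrix (Fin n) (Fin T) ℝ) (Um : Matrix (Fin m) (Fin T) ℝ)
    (E : Matrix (Fin n ⊕ (Fin n ⊕ Fin m)) (Fin p) ℝ)
    (Φ : Matrix (Fin p ⊕ Fin T) (Fin p ⊕ Fin T) ℝ) (hΦ : Φ.IsSymm)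
    -- Φ̂ ∈ Π_{p,T}:
    (Φ22d : Matrix (Fin T) (Fin T) ℝ)
    (hΦMP : IsMoorePenroseInv Φ.toBlocks₂₂ Φ22d)
    (hΦ22 : (-(Φ.toBlocks₂₂)).PosSemidef)
    (hΦker : ∀ x : Fin T → ℝ, Φ.toBlocks₂₂ *ᵥ x = 0 → Φ.toBlocks₁₂ *ᵥ x = 0)
    (hΦSchur : (Φ.toBlocks₁₁ - Φ.toBlocks₁₂ * Φ22d * Φ.toBlocks₂₁).PosSemidef)
    -- Φ̂₂₂ ≺ 0:
    (hΦ22neg : (-(Φ.toBlocks₂₂)).PosDef)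
    (A : Matrix (Fin n) (Fin n) ℝ) (B : Matrix (Fin n) (Fin m) ℝ) :
    ConsistentDP Xp Xm Um E Φ A B ↔
    (rowS A B * matN Xp Xm Um E Φ * (rowS A B)ᵀ).PosSemidef := by
  classical
  set P11 := Φ.toBlocks₁₁ with hP11
  set P12 := Φ.toBlocks₁₂ with hP12
  set P21 := Φ.toBlocks₂₁ with hP21
  set P22 := Φ.toBlocks₂₂ with hP22
  set S := rowS A B with hS
  set F := S * E with hF
  set G := S * dataX Xp Xm Um with hG
  clear_value S F G
  -- symmetry of blocks
  have hermT : ∀ {k : Type} [Fintype k] [DecidableEq k] {M : Matrix k k ℝ},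
      M.IsHermitian → Mᵀ = M := by
    intro k _ _ M h
    have h2 : Mᴴ = M := h
    rwa [conjTranspose_eq_transpose_of_trivial] at h2
  have h21 : P21 = P12ᵀ := by
    ext i j
    exact (hΦ.apply (Sum.inr i) (Sum.inl j)).symm
  have h22T : P22ᵀ = P22 := by
    ext i j
    exact hΦ.apply (Sum.inr i) (Sum.inr j)
  -- expansion of S N Sᵀ
  have hN : S * matN Xp Xm Um E Φ * Sᵀ
      = F * P11 * Fᵀ + F * P12 * Gᵀ + G * P21 * Fᵀ + G * P22 * Gᵀ := by
    have h1 : S * (fromCols E (dataX Xp Xm Um) * Φ * (fromCols E (dataX Xp Xm Um))ᵀ) * Sᵀ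
        = (S * fromCols E (dataX Xp Xm Um)) * Φ * (S * fromCols E (dataX Xp Xm Um))ᵀ := by
      rw [transpose_mul]
      simp only [Matrix.mul_assoc]
    rw [matN, h1, mul_fromCols, ← hF, ← hG, expand_blocks]
  -- expansion of the QMI
  have hQMI : ∀ Δ : Matrix (Fin p) (Fin T) ℝ,
      (fromRows (1 : Matrix (Fin p) (Fin p) ℝ) Δᵀ)ᵀ * Φ * fromRows (1 : Matrix (Fin p) (Fin p) ℝ) Δᵀ
        = P11 + P12 * Δᵀ + Δ * P21 + Δ * P22 * Δᵀ := by
    intro Δ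
    have h1 : fromRows (1 : Matrix (Fin p) (Fin p) ℝ) Δᵀ = (fromCols 1 Δ)ᵀ := by
      rw [transpose_fromCols, transpose_one]
    rw [h1, transpose_transpose, expand_blocks]
    simp only [Matrix.one_mul, Matrix.mul_one, transpose_one]
    rfl
  constructor
  · rintro ⟨Δ, hΔ, hpsd⟩
    rw [hQMI] at hpsd
    rw [← hS, ← hG] at hΔ
    rw [← hF] at hΔ
    have hid : S * matN Xp Xm Um E Φ * Sᵀ
        = F * (P11 + P12 * Δᵀ + Δ * P21 + Δ * P22 * Δᵀ) * Fᵀ := by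
      rw [hN, hΔ]
      simp only [Matrix.mul_add, Matrix.add_mul, Matrix.mul_assoc, transpose_mul]
    rw [hid]
    exact psd_conj hpsd F
  · intro hpsd
    -- Φ22 invertible
    have hdet : IsUnit P22.det := by
      have h1 : IsUnit (-P22).det := (Matrix.isUnit_iff_isUnit_det _).mp hΦ22neg.isUnit
      rw [det_neg] at h1
      rw [isUnit_iff_ne_zero] at h1 ⊢
      intro h0
      rw [h0, mul_zero] at h1
      exact h1 rfl
    have hd : Φ22d = P22⁻¹ := by
      have h := hΦMP.1
      have h2 := congrArg (fun M => P22⁻¹ * M * P22⁻¹) h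
      simpa only [Matrix.mul_assoc, Matrix.nonsing_inv_mul_cancel_left _ _ hdet,
        Matrix.mul_nonsing_inv_cancel_left _ _ hdet,
        Matrix.mul_nonsing_inv _ hdet, Matrix.mul_one] using h2
    have hinvT : P22⁻¹ᵀ = P22⁻¹ := by rw [Matrix.transpose_nonsing_inv, h22T]
    set Q := P11 - P12 * P22⁻¹ * P21 with hQdef
    have hQ : Q.PosSemidef := by rw [hQdef, ← hd]; exact hΦSchur
    set R := -P22 with hRdef
    have hR : R.PosDef := hΦ22neg
    set H := G + F * P12 * P22⁻¹ with hH
    clear_value Q H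
    have hkey : F * Q * Fᵀ - H * R * Hᵀ = S * matN Xp Xm Um E Φ * Sᵀ := by
      rw [hN, hQdef, hH, hRdef, h21]
      simp only [Matrix.mul_add, Matrix.add_mul, Matrix.sub_mul, Matrix.mul_sub,
        Matrix.mul_neg, Matrix.neg_mul, transpose_add, transpose_mul, transpose_neg,
        hinvT, Matrix.mul_assoc, sub_neg_eq_add,
        Matrix.mul_nonsing_inv_cancel_left _ _ hdet,
        Matrix.nonsing_inv_mul_cancel_left _ _ hdet]
      abel
    have hpsd2 : (F * Q * Fᵀ - H * R * Hᵀ).PosSemidef := by rw [hkey]; exact hpsd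
    open scoped MatrixOrder in
    set sQ := CFC.sqrt Q with hsQ
    open scoped MatrixOrder in
    set sR := CFC.sqrt R with hsR
    open scoped MatrixOrder in
    have hsQT : sQᵀ = sQ := hermT (CFC.sqrt_nonneg Q).posSemidef.1
    open scoped MatrixOrder in
    have hsRT : sRᵀ = sR := hermT (CFC.sqrt_nonneg R).posSemidef.1
    open scoped MatrixOrder in
    have hsQQ : sQ * sQ = Q := CFC.sqrt_mul_sqrt_self Q hQ.nonneg
    open scoped MatrixOrder in
    have hsRR : sR * sR = R := CFC.sqrt_mul_sqrt_self R hR.posSemidef.nonneg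
    have hdetR : IsUnit sR.det := by
      rw [isUnit_iff_ne_zero]
      intro h0
      have : R.det = 0 := by rw [← hsRR, det_mul, h0, mul_zero]
      have hRu : IsUnit R.det := (Matrix.isUnit_iff_isUnit_det _).mp hR.isUnit
      rw [isUnit_iff_ne_zero] at hRu
      exact hRu this
    have hsRinvT : sR⁻¹ᵀ = sR⁻¹ := by rw [Matrix.transpose_nonsing_inv, hsRT]
    clear_value sQ sR
    obtain ⟨Z, hZ1, hZ2⟩ := douglas (F * sQ) (H * sR) (by
      have : F * sQ * (F * sQ)ᵀ - H * sR * (H * sR)ᵀ = F * Q * Fᵀ - H * R * Hᵀ := by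
        rw [transpose_mul, transpose_mul, hsQT, hsRT, ← hsQQ, ← hsRR]
        simp only [Matrix.mul_assoc]
      rw [this]; exact hpsd2)
    set Y := sQ * Z * sR⁻¹ with hY
    set Δ := Y - P12 * P22⁻¹ with hΔdef
    clear_value Y Δ
    have hFY : F * Y = H := by
      rw [hY, ← Matrix.mul_assoc, ← Matrix.mul_assoc, hZ1,
        Matrix.mul_nonsing_inv_cancel_right _ _ hdetR]
    refine ⟨Δ, ?_, ?_⟩
    · rw [← hS, ← hG, ← hF]
      rw [hΔdef, Matrix.mul_sub, hFY, hH, ← Matrix.mul_assoc]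
      abel
    · rw [hQMI]
      have hYPY : Y * P22 * Yᵀ = -(sQ * (Z * Zᵀ) * sQ) := by
        rw [hY, transpose_mul, transpose_mul, hsRinvT, hsQT]
        have hmid : sR⁻¹ * P22 * sR⁻¹ = -1 := by
          have : P22 = -(sR * sR) := by rw [hsRR, hRdef, neg_neg]
          rw [this, Matrix.mul_neg, Matrix.neg_mul,
            Matrix.nonsing_inv_mul_cancel_left _ _ hdetR,
            Matrix.mul_nonsing_inv _ hdetR]
        calc sQ * Z * sR⁻¹ * P22 * (sR⁻¹ * (Zᵀ * sQ))
            = sQ * Z * (sR⁻¹ * P22 * sR⁻¹) * (Zᵀ * sQ) := by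
              simp only [Matrix.mul_assoc]
          _ = -(sQ * (Z * Zᵀ) * sQ) := by
              rw [hmid]
              simp only [Matrix.mul_neg, Matrix.neg_mul, Matrix.mul_one, Matrix.mul_assoc]
      have hmain : P11 + P12 * Δᵀ + Δ * P21 + Δ * P22 * Δᵀ = Q + Y * P22 * Yᵀ := by
        rw [hΔdef, hQdef, h21]
        simp only [transpose_sub, transpose_mul, hinvT, Matrix.mul_sub, Matrix.sub_mul,
          Matrix.mul_assoc, Matrix.mul_nonsing_inv_cancel_left _ _ hdet,
          Matrix.nonsing_inv_mul_cancel_left _ _ hdet]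
        abel
      rw [hmain, hYPY]
      have : Q + -(sQ * (Z * Zᵀ) * sQ) = sQ * (1 - Z * Zᵀ) * sQᵀ := by
        rw [hsQT, Matrix.mul_sub, Matrix.sub_mul, Matrix.mul_one, hsQQ]
        abel
      rw [this]
      exact psd_conj hZ2 sQ
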